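/- Let 0 < m ≤ M, Δ > 0, and π ≥ 1. Let g_1,…,g_T be revenue functions of the form g_t(v) = (p_t − f_t(v))·v with base prices p_t ∈ [m,M] and with each f_t : ℝ → ℝ convex on [0,Δ], f_t(0) = 0, and f_t ≥ 0 on [0,Δ]. Let v̄_1,…,v̄_T be a CR-Pursuit(π) trajectory for this input with v̄_t ∈ [0, v̂_t] for every t, where v̂_t ∈ [0,Δ] is a maximizer of g_t over [0,Δ]. Then ∑_{t=1}^T v̄_t ≤ [2Δ/(π·(1 + √(1 − 1/π)))]·(ln(M/m) + 1); that is, the worst-case inventory Φ_Δ(π) of CR-Pursuit(π) for one-way trading with price elasticity is at most 2Δ(ln θ + 1)/(π(1+√(1−1/π))). -/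

import Mathlib

/-- An admissible revenue function on `[0, Δ]` with base price in `[m, M]`. -/
def Admissible (Δ m M : ℝ) (g : ℝ → ℝ) : Prop :=
  ConcaveOn ℝ (Set.Icc 0 Δ) g ∧ MonotoneOn g (Set.Icc 0 Δ) ∧
  (∀ x ∈ Set.Icc (0:ℝ) Δ, DifferentiableAt ℝ g x) ∧
  g 0 = 0 ∧ deriv g 0 ∈ Set.Icc m M

/-- Offline optimum for the first `n` revenue functions with inventory `Δ`. -/
noncomputable def eta (Δ : ℝ) (g : ℕ → ℝ → ℝ) (n : ℕ) : ℝ :=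
  sSup { r : ℝ | ∃ v : ℕ → ℝ, (∀ t < n, 0 ≤ v t) ∧
    (∑ t ∈ Finset.range n, v t) ≤ Δ ∧ r = ∑ t ∈ Finset.range n, g t (v t) }

/-- A CR-Pursuit(π) trajectory for the first T revenue functions. -/
def CRTraj (Δ : ℝ) (g : ℕ → ℝ → ℝ) (T : ℕ) (pi : ℝ) (v : ℕ → ℝ) : Prop :=
  ∀ t < T, v t ∈ Set.Icc 0 Δ ∧ pi * g t (v t) = eta Δ g (t+1) - eta Δ g t


open Set

/-- Feasible-value set for the first `n` revenue functions with inventory `δ`. -/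
def Sset (g : ℕ → ℝ → ℝ) (n : ℕ) (δ : ℝ) : Set ℝ :=
  { r : ℝ | ∃ v : ℕ → ℝ, (∀ t < n, 0 ≤ v t) ∧
    (∑ t ∈ Finset.range n, v t) ≤ δ ∧ r = ∑ t ∈ Finset.range n, g t (v t) }

noncomputable def Hfun (g : ℕ → ℝ → ℝ) (n : ℕ) (δ : ℝ) : ℝ := sSup (Sset g n δ)

section basic

variable {Δ m M : ℝ} {g : ℕ → ℝ → ℝ} {n : ℕ} {δ : ℝ}

lemma zero_mem_Sset (hg0 : ∀ t < n, g t 0 = 0) (hδ : 0 ≤ δ) : (0:ℝ) ∈ Sset g n δ := by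
  refine ⟨fun _ => 0, fun t _ => le_refl 0, by simpa, ?_⟩
  rw [Finset.sum_congr rfl fun t ht => hg0 t (Finset.mem_range.1 ht)]
  simp

lemma Sset_vt_mem (hδΔ : δ ≤ Δ) {v : ℕ → ℝ}
    (hv0 : ∀ t < n, 0 ≤ v t) (hvs : (∑ t ∈ Finset.range n, v t) ≤ δ) :
    ∀ t < n, v t ∈ Icc (0:ℝ) Δ := by
  intro t ht
  refine ⟨hv0 t ht, ?_⟩
  calc v t ≤ ∑ s ∈ Finset.range n, v s := by
        refine Finset.single_le_sum (fun s hs => hv0 s (Finset.mem_range.1 hs)) ?_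
        exact Finset.mem_range.2 ht
    _ ≤ Δ := le_trans hvs hδΔ

lemma Sset_le (hM : 0 ≤ M) (hub : ∀ t < n, ∀ x, 0 ≤ x → x ≤ Δ → g t x ≤ M * x)
    (hδΔ : δ ≤ Δ) : ∀ r ∈ Sset g n δ, r ≤ M * δ := by
  rintro r ⟨v, hv0, hvs, rfl⟩
  calc ∑ t ∈ Finset.range n, g t (v t) ≤ ∑ t ∈ Finset.range n, M * v t := by
        refine Finset.sum_le_sum fun t ht => ?_
        have hmem := Sset_vt_mem hδΔ hv0 hvs t (Finset.mem_range.1 ht)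
        exact hub t (Finset.mem_range.1 ht) _ hmem.1 hmem.2
    _ = M * ∑ t ∈ Finset.range n, v t := (Finset.mul_sum _ _ _).symm
    _ ≤ M * δ := by
        refine mul_le_mul_of_nonneg_left hvs hM

lemma Sset_bddAbove (hM : 0 ≤ M) (hub : ∀ t < n, ∀ x, 0 ≤ x → x ≤ Δ → g t x ≤ M * x)
    (hδΔ : δ ≤ Δ) : BddAbove (Sset g n δ) :=
  ⟨M * δ, fun r hr => Sset_le hM hub hδΔ r hr⟩

lemma Hfun_le (hg0 : ∀ t < n, g t 0 = 0) (hM : 0 ≤ M)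
    (hub : ∀ t < n, ∀ x, 0 ≤ x → x ≤ Δ → g t x ≤ M * x)
    (hδ : 0 ≤ δ) (hδΔ : δ ≤ Δ) : Hfun g n δ ≤ M * δ :=
  csSup_le ⟨0, zero_mem_Sset hg0 hδ⟩ (Sset_le hM hub hδΔ)

lemma Hfun_nonneg (hg0 : ∀ t < n, g t 0 = 0) (hM : 0 ≤ M)
    (hub : ∀ t < n, ∀ x, 0 ≤ x → x ≤ Δ → g t x ≤ M * x)
    (hδ : 0 ≤ δ) (hδΔ : δ ≤ Δ) : 0 ≤ Hfun g n δ :=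
  le_csSup (Sset_bddAbove hM hub hδΔ) (zero_mem_Sset hg0 hδ)

lemma Hfun_mono_δ (hg0 : ∀ t < n, g t 0 = 0) (hM : 0 ≤ M)
    (hub : ∀ t < n, ∀ x, 0 ≤ x → x ≤ Δ → g t x ≤ M * x)
    {δ' : ℝ} (hδ : 0 ≤ δ) (hδδ' : δ ≤ δ') (hδ'Δ : δ' ≤ Δ) :
    Hfun g n δ ≤ Hfun g n δ' := by
  refine csSup_le_csSup (Sset_bddAbove hM hub hδ'Δ) ⟨0, zero_mem_Sset hg0 hδ⟩ ?_
  rintro r ⟨v, hv0, hvs, rfl⟩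
  exact ⟨v, hv0, le_trans hvs hδδ', rfl⟩



section more
variable {Δ m M : ℝ} {g : ℕ → ℝ → ℝ} {n : ℕ} {δ : ℝ}



theorem Hfun_decomp (hM : 0 ≤ M)
    (hub : ∀ t < n + 1, ∀ x, 0 ≤ x → x ≤ Δ → g t x ≤ M * x)
    (hδ : 0 ≤ δ) (hδΔ : δ ≤ Δ) :
    ∀ r ∈ Sset g (n+1) δ, ∃ u, 0 ≤ u ∧ u ≤ δ ∧ r ≤ Hfun g n (δ - u) + g n u := by
  rintro r ⟨v, hv0, hvs, rfl⟩
  have hvs' : (∑ t ∈ Finset.range n, v t) + v n ≤ δ := by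
    rwa [← Finset.sum_range_succ]
  have hn0 : 0 ≤ v n := hv0 n (by omega)
  have hpre0 : 0 ≤ ∑ t ∈ Finset.range n, v t :=
    Finset.sum_nonneg fun t ht => hv0 t (Nat.lt_succ_of_lt (Finset.mem_range.1 ht))
  refine ⟨v n, hn0, by linarith, ?_⟩
  rw [Finset.sum_range_succ]
  have : (∑ t ∈ Finset.range n, g t (v t)) ≤ Hfun g n (δ - v n) := by
    refine le_csSup ⟨M * (δ - v n), fun r hr => ?_⟩ ⟨v, fun t ht => hv0 t (by omega), by linarith, rfl⟩
    · obtain ⟨w, hw0, hws, rfl⟩ := hr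
      calc ∑ t ∈ Finset.range n, g t (w t) ≤ ∑ t ∈ Finset.range n, M * w t := by
            refine Finset.sum_le_sum fun t ht => ?_
            have ht' := Finset.mem_range.1 ht
            have h1 : 0 ≤ w t := hw0 t ht'
            have h2 : w t ≤ Δ := by
              have : w t ≤ ∑ s ∈ Finset.range n, w s :=
                Finset.single_le_sum (fun s hs => hw0 s (Finset.mem_range.1 hs)) ht
              linarith
            exact hub t (by omega) _ h1 h2
        _ = M * ∑ t ∈ Finset.range n, w t := (Finset.mul_sum _ _ _).symm
        _ ≤ M * (δ - v n) := mul_le_mul_of_nonneg_left hws hM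
  linarith

theorem Hfun_extend (hg0 : ∀ t < n, g t 0 = 0) (hM : 0 ≤ M)
    (hub : ∀ t < n + 1, ∀ x, 0 ≤ x → x ≤ Δ → g t x ≤ M * x)
    {u : ℝ} (hu : 0 ≤ u) (huδ : u ≤ δ) (hδΔ : δ ≤ Δ) :
    Hfun g n (δ - u) + g n u ≤ Hfun g (n+1) δ := by
  have hS : ∀ r ∈ Sset g n (δ - u), r + g n u ∈ Sset g (n+1) δ := by
    rintro r ⟨v, hv0, hvs, rfl⟩
    have hupd : ∀ t ∈ Finset.range n, Function.update v n u t = v t := fun t ht =>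
      Function.update_of_ne (by have := Finset.mem_range.1 ht; omega) _ _
    refine ⟨Function.update v n u, ?_, ?_, ?_⟩
    · intro t ht
      rcases Nat.lt_succ_iff_lt_or_eq.1 ht with h | h
      · rw [Function.update_of_ne (by omega)]; exact hv0 t h
      · rw [h, Function.update_self]; exact hu
    · rw [Finset.sum_range_succ, Function.update_self,
        Finset.sum_congr rfl hupd]
      linarith
    · rw [Finset.sum_range_succ, Function.update_self,
        Finset.sum_congr rfl fun t ht => congrArg (g t) (hupd t ht)]
  have hbdd : BddAbove (Sset g (n+1) δ) := by
    refine ⟨M * δ, fun r hr => ?_⟩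
    obtain ⟨w, hw0, hws, rfl⟩ := hr
    calc ∑ t ∈ Finset.range (n+1), g t (w t) ≤ ∑ t ∈ Finset.range (n+1), M * w t := by
          refine Finset.sum_le_sum fun t ht => ?_
          have ht' := Finset.mem_range.1 ht
          have h1 : 0 ≤ w t := hw0 t ht'
          have h2 : w t ≤ Δ := by
            have : w t ≤ ∑ s ∈ Finset.range (n+1), w s :=
              Finset.single_le_sum (fun s hs => hw0 s (Finset.mem_range.1 hs)) ht
            linarith
          exact hub t ht' _ h1 h2
      _ = M * ∑ t ∈ Finset.range (n+1), w t := (Finset.mul_sum _ _ _).symm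
      _ ≤ M * δ := mul_le_mul_of_nonneg_left hws hM
  have h1 : Hfun g n (δ - u) ≤ Hfun g (n+1) δ - g n u := by
    refine csSup_le ⟨0, ⟨fun _ => 0, fun t _ => le_refl 0, by simp; linarith,
      by rw [Finset.sum_congr rfl fun t ht => hg0 t (Finset.mem_range.1 ht)]; simp⟩⟩ ?_
    intro r hr
    have h2 : r + g n u ≤ Hfun g (n+1) δ := le_csSup hbdd (hS r hr)
    linarith
  linarith



theorem Hfun_mono_n (hg0 : ∀ t < n + 1, g t 0 = 0) (hM : 0 ≤ M)
    (hub : ∀ t < n + 1, ∀ x, 0 ≤ x → x ≤ Δ → g t x ≤ M * x)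
    (hδ : 0 ≤ δ) (hδΔ : δ ≤ Δ) : Hfun g n δ ≤ Hfun g (n+1) δ := by
  have h := Hfun_extend (g := g) (M := M) (δ := δ)
    (fun t ht => hg0 t (Nat.lt_succ_of_lt ht)) hM hub (le_refl 0) hδ hδΔ
  rw [hg0 n (by omega)] at h
  simpa using h


theorem Hfun_concave (hg0 : ∀ t < n, g t 0 = 0) (hM : 0 ≤ M)
    (hub : ∀ t < n, ∀ x, 0 ≤ x → x ≤ Δ → g t x ≤ M * x)
    (hconc : ∀ t < n, ConcaveOn ℝ (Icc 0 Δ) (g t)) :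
    ConcaveOn ℝ (Icc (0:ℝ) Δ) (Hfun g n) := by
  refine ⟨convex_Icc 0 Δ, ?_⟩
  rintro δ₁ hδ₁ δ₂ hδ₂ a b ha hb hab
  simp only [smul_eq_mul]
  have hmemc : a * δ₁ + b * δ₂ ∈ Icc (0:ℝ) Δ :=
    (convex_Icc 0 Δ) hδ₁ hδ₂ ha hb hab
  have hbddc : BddAbove (Sset g n (a * δ₁ + b * δ₂)) := by
    refine ⟨M * (a * δ₁ + b * δ₂), fun r hr => ?_⟩
    obtain ⟨w, hw0, hws, rfl⟩ := hr
    calc ∑ t ∈ Finset.range n, g t (w t) ≤ ∑ t ∈ Finset.range n, M * w t := by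
          refine Finset.sum_le_sum fun t ht => ?_
          have ht' := Finset.mem_range.1 ht
          have h2 : w t ≤ Δ := by
            have := Finset.single_le_sum (fun s hs => hw0 s (Finset.mem_range.1 hs)) ht
            have := hmemc.2; linarith
          exact hub t ht' _ (hw0 t ht') h2
      _ = M * ∑ t ∈ Finset.range n, w t := (Finset.mul_sum _ _ _).symm
      _ ≤ M * (a * δ₁ + b * δ₂) := mul_le_mul_of_nonneg_left hws hM
  have key : ∀ r₁ ∈ Sset g n δ₁, ∀ r₂ ∈ Sset g n δ₂,
      a * r₁ + b * r₂ ≤ Hfun g n (a * δ₁ + b * δ₂) := by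
    rintro r₁ ⟨v₁, hv₁0, hv₁s, rfl⟩ r₂ ⟨v₂, hv₂0, hv₂s, rfl⟩
    have hval : a * (∑ t ∈ Finset.range n, g t (v₁ t)) + b * (∑ t ∈ Finset.range n, g t (v₂ t))
        ≤ ∑ t ∈ Finset.range n, g t (a * v₁ t + b * v₂ t) := by
      rw [Finset.mul_sum, Finset.mul_sum, ← Finset.sum_add_distrib]
      refine Finset.sum_le_sum fun t ht => ?_
      have ht' := Finset.mem_range.1 ht
      have hm₁ : v₁ t ∈ Icc (0:ℝ) Δ := by
        constructor
        · exact hv₁0 t ht'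
        · have := Finset.single_le_sum (fun s hs => hv₁0 s (Finset.mem_range.1 hs)) ht
          have := hδ₁.2; linarith
      have hm₂ : v₂ t ∈ Icc (0:ℝ) Δ := by
        constructor
        · exact hv₂0 t ht'
        · have := Finset.single_le_sum (fun s hs => hv₂0 s (Finset.mem_range.1 hs)) ht
          have := hδ₂.2; linarith
      have := (hconc t ht').2 hm₁ hm₂ ha hb hab
      simpa using this
    have hmem : (∑ t ∈ Finset.range n, g t (a * v₁ t + b * v₂ t)) ∈ Sset g n (a * δ₁ + b * δ₂) := by
      refine ⟨fun t => a * v₁ t + b * v₂ t, fun t ht => by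
        have := hv₁0 t ht; have := hv₂0 t ht; positivity, ?_, rfl⟩
      rw [Finset.sum_add_distrib, ← Finset.mul_sum, ← Finset.mul_sum]
      have h1 := mul_le_mul_of_nonneg_left hv₁s ha
      have h2 := mul_le_mul_of_nonneg_left hv₂s hb
      linarith
    exact le_trans hval (le_csSup hbddc hmem)
  have hne₁ : (Sset g n δ₁).Nonempty := ⟨0, fun _ => 0, fun t _ => le_refl 0, by simpa using hδ₁.1,
    by rw [Finset.sum_congr rfl fun t ht => hg0 t (Finset.mem_range.1 ht)]; simp⟩
  have hne₂ : (Sset g n δ₂).Nonempty := ⟨0, fun _ => 0, fun t _ => le_refl 0, by simpa using hδ₂.1,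
    by rw [Finset.sum_congr rfl fun t ht => hg0 t (Finset.mem_range.1 ht)]; simp⟩
  have h0mem₁ : (0:ℝ) ∈ Sset g n δ₁ := ⟨fun _ => 0, fun t _ => le_refl 0,
    by simpa using hδ₁.1,
    by rw [Finset.sum_congr rfl fun t ht => hg0 t (Finset.mem_range.1 ht)]; simp⟩
  have h0mem₂ : (0:ℝ) ∈ Sset g n δ₂ := ⟨fun _ => 0, fun t _ => le_refl 0,
    by simpa using hδ₂.1,
    by rw [Finset.sum_congr rfl fun t ht => hg0 t (Finset.mem_range.1 ht)]; simp⟩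
  rcases eq_or_lt_of_le ha with ha0 | ha0
  · have hb1 : b = 1 := by linarith
    have h : Hfun g n δ₂ ≤ Hfun g n (a * δ₁ + b * δ₂) := by
      refine csSup_le hne₂ fun r₂ hr₂ => ?_
      have h1 := key 0 h0mem₁ r₂ hr₂
      have e : a * 0 + b * r₂ = r₂ := by rw [← ha0, hb1]; ring
      linarith
    have e2 : a * Hfun g n δ₁ + b * Hfun g n δ₂ = Hfun g n δ₂ := by
      rw [← ha0, hb1]; ring
    linarith
  rcases eq_or_lt_of_le hb with hb0 | hb0
  · have ha1 : a = 1 := by linarith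
    have h : Hfun g n δ₁ ≤ Hfun g n (a * δ₁ + b * δ₂) := by
      refine csSup_le hne₁ fun r₁ hr₁ => ?_
      have h1 := key r₁ hr₁ 0 h0mem₂
      have e : a * r₁ + b * 0 = r₁ := by rw [← hb0, ha1]; ring
      linarith
    have e2 : a * Hfun g n δ₁ + b * Hfun g n δ₂ = Hfun g n δ₁ := by
      rw [← hb0, ha1]; ring
    linarith
  · -- both positive
    have h2 : Hfun g n δ₂ ≤ (Hfun g n (a * δ₁ + b * δ₂) - a * Hfun g n δ₁) / b := by
      refine csSup_le hne₂ fun r₂ hr₂ => ?_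
      rw [le_div_iff₀ hb0]
      have h1 : Hfun g n δ₁ ≤ (Hfun g n (a * δ₁ + b * δ₂) - b * r₂) / a := by
        refine csSup_le hne₁ fun r₁ hr₁ => ?_
        rw [le_div_iff₀ ha0]
        have := key r₁ hr₁ r₂ hr₂
        linarith
      rw [le_div_iff₀ ha0] at h1
      linarith
    rw [le_div_iff₀ hb0] at h2
    linarith

theorem concave_increment {F : ℝ → ℝ} (hF : ConcaveOn ℝ (Icc (0:ℝ) Δ) F)
    {x y u : ℝ} (hx : 0 ≤ x) (hxy : x ≤ y) (hu : 0 ≤ u) (hyu : y + u ≤ Δ) :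
    F x + F (y + u) ≤ F (x + u) + F y := by
  rcases eq_or_lt_of_le (le_trans hxy (by linarith : y ≤ y + u)) with hd | hd
  · -- x = y + u : then u = 0, x = y
    have hu0 : u = 0 := by linarith
    have hxy' : x = y := by linarith
    rw [hu0, hxy', add_zero]
  · have hd0 : (0:ℝ) < y + u - x := by linarith
    set t := u / (y + u - x) with htd
    have ht0 : 0 ≤ t := div_nonneg hu (le_of_lt hd0)
    have ht1 : t ≤ 1 := by
      rw [htd, div_le_one hd0]; linarith
    have hxmem : x ∈ Icc (0:ℝ) Δ := ⟨hx, by linarith⟩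
    have hymem : y + u ∈ Icc (0:ℝ) Δ := ⟨by linarith, hyu⟩
    have e1 : (1 - t) • x + t • (y + u) = x + u := by
      try simp only [smul_eq_mul]
      rw [htd]
      field_simp
      ring
    have e2 : t • x + (1 - t) • (y + u) = y := by
      try simp only [smul_eq_mul]
      rw [htd]
      field_simp
      ring
    have h1 := hF.2 hxmem hymem (by linarith : (0:ℝ) ≤ 1 - t) ht0 (by ring)
    have h2 := hF.2 hxmem hymem ht0 (by linarith : (0:ℝ) ≤ 1 - t) (by ring)
    rw [e1] at h1
    rw [e2] at h2
    try simp only [smul_eq_mul] at h1 h2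
    linarith

end more
open Set

noncomputable def Hstar (g : ℕ → ℝ → ℝ) (Δ : ℝ) (n : ℕ) (y : ℝ) : ℝ :=
  sSup ((fun δ => Hfun g n δ - y * δ) '' Icc 0 Δ)

section hstar
variable {Δ m M : ℝ} {g : ℕ → ℝ → ℝ} {n : ℕ} {y z : ℝ}

lemma Hstar_bddAbove (hg0 : ∀ t < n, g t 0 = 0) (hM : 0 ≤ M)
    (hub : ∀ t < n, ∀ x, 0 ≤ x → x ≤ Δ → g t x ≤ M * x) (hΔ : 0 ≤ Δ) :
    BddAbove ((fun δ => Hfun g n δ - y * δ) '' Icc 0 Δ) := by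
  refine ⟨M * Δ + |y| * Δ, ?_⟩
  rintro r ⟨δ, hδ, rfl⟩
  have h1 : Hfun g n δ ≤ M * δ := Hfun_le hg0 hM hub hδ.1 hδ.2
  have h2 : M * δ ≤ M * Δ := mul_le_mul_of_nonneg_left hδ.2 hM
  have h3 : -(y * δ) ≤ |y| * Δ := by
    calc -(y * δ) ≤ |y * δ| := neg_le_abs _
      _ = |y| * |δ| := abs_mul _ _
      _ ≤ |y| * Δ := by
          refine mul_le_mul_of_nonneg_left ?_ (abs_nonneg y)
          rw [abs_of_nonneg hδ.1]; exact hδ.2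
  simp only []
  linarith

lemma Hstar_ge (hg0 : ∀ t < n, g t 0 = 0) (hM : 0 ≤ M)
    (hub : ∀ t < n, ∀ x, 0 ≤ x → x ≤ Δ → g t x ≤ M * x)
    {δ : ℝ} (hδ : δ ∈ Icc (0:ℝ) Δ) :
    Hfun g n δ - y * δ ≤ Hstar g Δ n y :=
  le_csSup (Hstar_bddAbove hg0 hM hub (le_trans hδ.1 hδ.2)) ⟨δ, hδ, rfl⟩

lemma Hstar_le {C : ℝ} (hΔ : 0 ≤ Δ)
    (h : ∀ δ ∈ Icc (0:ℝ) Δ, Hfun g n δ - y * δ ≤ C) :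
    Hstar g Δ n y ≤ C := by
  refine csSup_le ⟨Hfun g n 0 - y * 0, ⟨0, ⟨le_refl 0, hΔ⟩, rfl⟩⟩ ?_
  rintro r ⟨δ, hδ, rfl⟩
  exact h δ hδ

lemma Hstar_lip (hg0 : ∀ t < n, g t 0 = 0) (hM : 0 ≤ M)
    (hub : ∀ t < n, ∀ x, 0 ≤ x → x ≤ Δ → g t x ≤ M * x) (hΔ : 0 ≤ Δ) :
    Hstar g Δ n y ≤ Hstar g Δ n z + Δ * |y - z| := by
  refine Hstar_le hΔ fun δ hδ => ?_
  have h1 : Hfun g n δ - z * δ ≤ Hstar g Δ n z := Hstar_ge hg0 hM hub hδ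
  have h2 : (z - y) * δ ≤ Δ * |y - z| := by
    calc (z - y) * δ ≤ |(z - y) * δ| := le_abs_self _
      _ = |z - y| * |δ| := abs_mul _ _
      _ ≤ |y - z| * Δ := by
          rw [abs_sub_comm]
          refine mul_le_mul_of_nonneg_left ?_ (abs_nonneg _)
          rw [abs_of_nonneg hδ.1]; exact hδ.2
      _ = Δ * |y - z| := mul_comm _ _
  linarith

lemma Hstar_continuous (hg0 : ∀ t < n, g t 0 = 0) (hM : 0 ≤ M)
    (hub : ∀ t < n, ∀ x, 0 ≤ x → x ≤ Δ → g t x ≤ M * x) (hΔ : 0 ≤ Δ) :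
    Continuous (Hstar g Δ n) := by
  have hlip : LipschitzWith (Real.toNNReal Δ) (Hstar g Δ n) := by
    rw [lipschitzWith_iff_dist_le_mul]
    intro a b
    rw [Real.dist_eq, Real.dist_eq, Real.coe_toNNReal Δ hΔ]
    have h1 := Hstar_lip (g := g) (y := a) (z := b) hg0 hM hub hΔ
    have h2 := Hstar_lip (g := g) (y := b) (z := a) hg0 hM hub hΔ
    rw [abs_sub_comm] at h2
    rw [abs_le]
    constructor <;> nlinarith [abs_nonneg (a - b)]
  exact hlip.continuous

lemma Hstar_intble (hg0 : ∀ t < n, g t 0 = 0) (hM : 0 ≤ M)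
    (hub : ∀ t < n, ∀ x, 0 ≤ x → x ≤ Δ → g t x ≤ M * x) (hΔ : 0 ≤ Δ)
    {a b : ℝ} (ha : 0 < a) (hab : a ≤ b) :
    IntervalIntegrable (fun y => Hstar g Δ n y / y^2) MeasureTheory.volume a b := by
  refine ContinuousOn.intervalIntegrable ?_
  refine ContinuousOn.div ((Hstar_continuous hg0 hM hub hΔ).continuousOn)
    (continuousOn_pow 2) ?_
  intro x hx
  rw [uIcc_of_le hab] at hx
  have : 0 < x := lt_of_lt_of_le ha hx.1
  positivity

end hstar
open Set intervalIntegral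

lemma int_inv_sq {a b : ℝ} (ha : 0 < a) (hab : a ≤ b) :
    ∫ y in a..b, 1 / y^2 = 1/a - 1/b := by
  have hb : 0 < b := lt_of_lt_of_le ha hab
  have h0 : (0:ℝ) ∉ uIcc a b := by
    rw [uIcc_of_le hab]
    rintro ⟨h1, -⟩; linarith
  have h := integral_zpow (a := a) (b := b) (n := -2) (Or.inr ⟨by norm_num, h0⟩)
  have e : ∀ y : ℝ, y ≠ 0 → (y : ℝ) ^ (-2 : ℤ) = 1 / y^2 := by
    intro y hy
    rw [zpow_neg, one_div]
    norm_num
    try rfl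
  rw [intervalIntegral.integral_congr (g := fun y => y ^ (-2:ℤ)) ?_]
  · rw [h]
    norm_num
    ring
  · intro y hy
    rw [uIcc_of_le hab] at hy
    have : 0 < y := lt_of_lt_of_le ha hy.1
    exact (e y (ne_of_gt this)).symm

noncomputable def Phi (g : ℕ → ℝ → ℝ) (Δ m M : ℝ) (n : ℕ) : ℝ :=
  Hfun g n Δ / m - ∫ y in m..M, Hstar g Δ n y / y^2

theorem Phi_step {Δ m M : ℝ} {g : ℕ → ℝ → ℝ} {n : ℕ} {pn : ℝ}
    (hΔ : 0 < Δ) (hm : 0 < m)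
    (hg0 : ∀ t < n + 1, g t 0 = 0)
    (hub : ∀ t < n + 1, ∀ x, 0 ≤ x → x ≤ Δ → g t x ≤ M * x)
    (hubp : ∀ x, 0 ≤ x → x ≤ Δ → g n x ≤ pn * x)
    (hpm : m ≤ pn) (hpM : pn ≤ M)
    (hconc : ∀ t < n, ConcaveOn ℝ (Icc 0 Δ) (g t)) :
    (Hfun g (n+1) Δ - Hfun g n Δ) / pn ≤ Phi g Δ m M (n+1) - Phi g Δ m M n := by
  have hpn : 0 < pn := lt_of_lt_of_le hm hpm
  have hM : 0 ≤ M := le_trans (le_trans hm.le hpm) hpM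
  have hmM : m ≤ M := le_trans hpm hpM
  have hg0n : ∀ t < n, g t 0 = 0 := fun t ht => hg0 t (Nat.lt_succ_of_lt ht)
  have hubn : ∀ t < n, ∀ x, 0 ≤ x → x ≤ Δ → g t x ≤ M * x :=
    fun t ht => hub t (Nat.lt_succ_of_lt ht)
  set E := Hfun g (n+1) Δ - Hfun g n Δ with hEdef
  have hE0 : 0 ≤ E := by
    have := Hfun_mono_n (δ := Δ) hg0 hM hub hΔ.le (le_refl Δ)
    simp only [hEdef]; linarith
  have hconcH : ConcaveOn ℝ (Icc (0:ℝ) Δ) (Hfun g n) := Hfun_concave hg0n hM hubn hconc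
  -- pointwise gain bound
  have hpoint : ∀ δ ∈ Icc (0:ℝ) Δ, Hfun g (n+1) δ ≤ Hfun g n δ + E := by
    intro δ hδ
    refine csSup_le ⟨0, zero_mem_Sset hg0 hδ.1⟩ fun r hr => ?_
    obtain ⟨u, hu0, huδ, hru⟩ := Hfun_decomp hM hub hδ.1 hδ.2 r hr
    have huΔ : u ≤ Δ := le_trans huδ hδ.2
    have hci := concave_increment hconcH (x := δ - u) (y := Δ - u) (u := u)
      (by linarith) (by linarith [hδ.2]) hu0 (by linarith)
    have e1 : δ - u + u = δ := by ring
    have e2 : Δ - u + u = Δ := by ring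
    rw [e1, e2] at hci
    have hext := Hfun_extend (δ := Δ) hg0n hM hub hu0 huΔ (le_refl Δ)
    simp only [hEdef]
    linarith
  have hstar_sub : ∀ y, Hstar g Δ (n+1) y ≤ Hstar g Δ n y + E := by
    intro y
    refine Hstar_le hΔ.le fun δ hδ => ?_
    have h1 := hpoint δ hδ
    have h2 := Hstar_ge (y := y) hg0n hM hubn hδ
    linarith
  have hstar_mono : ∀ y, Hstar g Δ n y ≤ Hstar g Δ (n+1) y := by
    intro y
    refine Hstar_le hΔ.le fun δ hδ => ?_
    have h1 := Hfun_mono_n hg0 hM hub hδ.1 hδ.2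
    have h2 := Hstar_ge (y := y) hg0 hM hub hδ
    linarith
  have hstar_hi : ∀ y, pn ≤ y → Hstar g Δ (n+1) y ≤ Hstar g Δ n y := by
    intro y hy
    refine Hstar_le hΔ.le fun δ hδ => ?_
    have key : Hfun g (n+1) δ ≤ Hstar g Δ n y + y * δ := by
      refine csSup_le ⟨0, zero_mem_Sset hg0 hδ.1⟩ fun r hr => ?_
      obtain ⟨u, hu0, huδ, hru⟩ := Hfun_decomp hM hub hδ.1 hδ.2 r hr
      have huΔ : u ≤ Δ := le_trans huδ hδ.2
      have h1 : g n u ≤ pn * u := hubp u hu0 huΔ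
      have h2 : Hfun g n (δ - u) - y * (δ - u) ≤ Hstar g Δ n y :=
        Hstar_ge hg0n hM hubn ⟨by linarith, by linarith [hδ.2]⟩
      nlinarith [mul_le_mul_of_nonneg_right hy hu0]
    linarith
  -- integrability
  have int_np1 := Hstar_intble (n := n+1) hg0 hM hub hΔ.le hm hmM
  have int_n := Hstar_intble (n := n) hg0n hM hubn hΔ.le hm hmM
  have int_np1' := Hstar_intble (n := n+1) hg0 hM hub hΔ.le hm hpm
  have int_n' := Hstar_intble (n := n) hg0n hM hubn hΔ.le hm hpm
  have int_np1'' := Hstar_intble (n := n+1) hg0 hM hub hΔ.le hpn hpM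
  have int_n'' := Hstar_intble (n := n) hg0n hM hubn hΔ.le hpn hpM
  have intE : ∀ a b : ℝ, 0 < a → a ≤ b →
      IntervalIntegrable (fun y => E / y^2) MeasureTheory.volume a b := by
    intro a b ha hab
    refine ContinuousOn.intervalIntegrable (ContinuousOn.div continuousOn_const
      (continuousOn_pow 2) fun x hx => ?_)
    rw [uIcc_of_le hab] at hx
    have : 0 < x := lt_of_lt_of_le ha hx.1
    positivity
  -- the difference integrand
  set D : ℝ → ℝ := fun y => Hstar g Δ (n+1) y / y^2 - Hstar g Δ n y / y^2 with hDdef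
  have intD1 : IntervalIntegrable D MeasureTheory.volume m pn := int_np1'.sub int_n'
  have intD2 : IntervalIntegrable D MeasureTheory.volume pn M := int_np1''.sub int_n''
  have hsplit : (∫ y in m..pn, D y) + (∫ y in pn..M, D y) = ∫ y in m..M, D y :=
    intervalIntegral.integral_add_adjacent_intervals intD1 intD2
  have hI2 : (∫ y in pn..M, D y) = 0 := by
    rw [intervalIntegral.integral_congr (g := fun _ => (0:ℝ))]
    · simp
    · intro y hy
      rw [uIcc_of_le hpM] at hy
      have h1 := hstar_hi y hy.1
      have h2 := hstar_mono y
      have : Hstar g Δ (n+1) y = Hstar g Δ n y := le_antisymm h1 h2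
      simp only [hDdef, this, sub_self]
  have hI1 : (∫ y in m..pn, D y) ≤ E * (1/m - 1/pn) := by
    have hmono : (∫ y in m..pn, D y) ≤ ∫ y in m..pn, E / y^2 := by
      refine intervalIntegral.integral_mono_on hpm intD1 (intE m pn hm hpm) fun y hy => ?_
      have hy0 : 0 < y := lt_of_lt_of_le hm hy.1
      have h1 := hstar_sub y
      have hsq : (0:ℝ) < y^2 := by positivity
      simp only [hDdef]
      rw [div_sub_div_same]
      gcongr
      linarith
    have hval : (∫ y in m..pn, E / y^2) = E * (1/m - 1/pn) := by
      rw [intervalIntegral.integral_congr (g := fun y => E * (1/y^2))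
        (fun y _ => (mul_one_div _ _).symm), intervalIntegral.integral_const_mul,
        int_inv_sq hm hpm]
    linarith
  have hPhidiff : Phi g Δ m M (n+1) - Phi g Δ m M n = E/m - ∫ y in m..M, D y := by
    simp only [Phi, hDdef]
    rw [intervalIntegral.integral_sub int_np1 int_n, hEdef]
    ring
  have hfin : E/m - E*(1/m - 1/pn) = E/pn := by
    field_simp
    ring
  rw [hPhidiff]
  linarith
open Set

section p6
variable {Δ m M : ℝ} {g : ℕ → ℝ → ℝ}

lemma Hfun_zero {δ : ℝ} (hδ : 0 ≤ δ) : Hfun g 0 δ = 0 := by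
  have hmem : (0:ℝ) ∈ Sset g 0 δ := ⟨fun _ => 0, fun t ht => by omega, by simpa, by simp⟩
  refine le_antisymm (csSup_le ⟨0, hmem⟩ ?_) (le_csSup ⟨0, ?_⟩ hmem)
  · rintro r ⟨v, -, -, rfl⟩; simp
  · rintro r ⟨v, -, -, rfl⟩; simp

lemma Hstar_zero {y : ℝ} (hy : 0 ≤ y) (hΔ : 0 ≤ Δ) : Hstar g Δ 0 y = 0 := by
  refine le_antisymm (Hstar_le hΔ fun δ hδ => ?_) ?_
  · rw [Hfun_zero hδ.1]
    nlinarith [mul_nonneg hy hδ.1]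
  · have := Hstar_ge (g := g) (y := y) (n := 0) (M := 0) (fun t ht => by omega)
      (le_refl 0) (fun t ht => by omega) (⟨le_refl 0, hΔ⟩ : (0:ℝ) ∈ Icc (0:ℝ) Δ)
    rw [Hfun_zero (le_refl 0)] at this
    simpa using this

theorem sum_increments_le {p : ℕ → ℝ} {T : ℕ}
    (hΔ : 0 < Δ) (hm : 0 < m) (hmM : m ≤ M)
    (hg0 : ∀ t < T, g t 0 = 0)
    (hub : ∀ t < T, ∀ x, 0 ≤ x → x ≤ Δ → g t x ≤ M * x)
    (hubp : ∀ t < T, ∀ x, 0 ≤ x → x ≤ Δ → g t x ≤ p t * x)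
    (hp : ∀ t < T, p t ∈ Icc m M)
    (hconc : ∀ t < T, ConcaveOn ℝ (Icc (0:ℝ) Δ) (g t)) :
    ∑ t ∈ Finset.range T, (Hfun g (t+1) Δ - Hfun g t Δ) / (p t)
      ≤ Δ * (Real.log (M/m) + 1) := by
  have hM : 0 < M := lt_of_lt_of_le hm hmM
  -- telescoping via the potential
  have hstep : ∀ t < T, (Hfun g (t+1) Δ - Hfun g t Δ) / (p t)
      ≤ Phi g Δ m M (t+1) - Phi g Δ m M t := by
    intro t ht
    exact Phi_step hΔ hm (fun s hs => hg0 s (by omega)) (fun s hs => hub s (by omega))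
      (hubp t ht) (hp t ht).1 (hp t ht).2 (fun s hs => hconc s (by omega))
  have hsum : ∑ t ∈ Finset.range T, (Hfun g (t+1) Δ - Hfun g t Δ) / (p t)
      ≤ Phi g Δ m M T - Phi g Δ m M 0 := by
    rw [← Finset.sum_range_sub (fun n => Phi g Δ m M n) T]
    exact Finset.sum_le_sum fun t ht => hstep t (Finset.mem_range.1 ht)
  -- Phi 0 = 0
  have hPhi0 : Phi g Δ m M 0 = 0 := by
    unfold Phi
    rw [Hfun_zero hΔ.le]
    rw [intervalIntegral.integral_congr (g := fun _ => (0:ℝ)) (fun y hy => by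
      rw [uIcc_of_le hmM] at hy
      simp [Hstar_zero (le_trans hm.le hy.1) hΔ.le])]
    simp
  -- final bound on Phi T
  have hg0T : ∀ t < T, g t 0 = 0 := hg0
  set A := Hfun g T Δ with hA
  have hA0 : 0 ≤ A := Hfun_nonneg hg0 hM.le hub hΔ.le (le_refl Δ)
  have hAM : A ≤ M * Δ := Hfun_le hg0 hM.le hub hΔ.le (le_refl Δ)
  have intH := Hstar_intble (n := T) hg0 hM.le hub hΔ.le hm hmM
  have intlin : IntervalIntegrable (fun y => A * (1/y^2) - Δ * (1/y))
      MeasureTheory.volume m M := by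
    refine ContinuousOn.intervalIntegrable (ContinuousOn.sub
      (ContinuousOn.mul continuousOn_const ?_) (ContinuousOn.mul continuousOn_const ?_)) <;>
    · refine ContinuousOn.div continuousOn_const (by fun_prop) fun x hx => ?_
      rw [uIcc_of_le hmM] at hx
      have : 0 < x := lt_of_lt_of_le hm hx.1
      positivity
  have hIl : (∫ y in m..M, (A * (1/y^2) - Δ * (1/y)))
      ≤ ∫ y in m..M, Hstar g Δ T y / y^2 := by
    refine intervalIntegral.integral_mono_on hmM intlin intH fun y hy => ?_
    have hy0 : 0 < y := lt_of_lt_of_le hm hy.1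
    have hlow : A - y * Δ ≤ Hstar g Δ T y :=
      Hstar_ge hg0 hM.le hub ⟨hΔ.le, le_refl Δ⟩
    have hsq : (0:ℝ) < y^2 := by positivity
    have e : A * (1/y^2) - Δ * (1/y) = (A - y * Δ)/y^2 := by
      field_simp
    rw [e]
    gcongr
  have hIval : (∫ y in m..M, (A * (1/y^2) - Δ * (1/y)))
      = A * (1/m - 1/M) - Δ * Real.log (M/m) := by
    have h0 : (0:ℝ) ∉ uIcc m M := by
      rw [uIcc_of_le hmM]; rintro ⟨h1, -⟩; linarith
    have i1 : IntervalIntegrable (fun y : ℝ => A * (1/y^2)) MeasureTheory.volume m M := by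
      refine ContinuousOn.intervalIntegrable (ContinuousOn.mul continuousOn_const ?_)
      refine ContinuousOn.div continuousOn_const (by fun_prop) fun x hx => ?_
      rw [uIcc_of_le hmM] at hx
      have : 0 < x := lt_of_lt_of_le hm hx.1
      positivity
    have i2 : IntervalIntegrable (fun y : ℝ => Δ * (1/y)) MeasureTheory.volume m M := by
      refine ContinuousOn.intervalIntegrable (ContinuousOn.mul continuousOn_const ?_)
      refine ContinuousOn.div continuousOn_const (by fun_prop) fun x hx => ?_
      rw [uIcc_of_le hmM] at hx
      have : 0 < x := lt_of_lt_of_le hm hx.1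
      exact ne_of_gt this
    rw [intervalIntegral.integral_sub i1 i2, intervalIntegral.integral_const_mul,
      intervalIntegral.integral_const_mul, int_inv_sq hm hmM, integral_one_div h0]
  have hPhiT : Phi g Δ m M T ≤ Δ * (Real.log (M/m) + 1) := by
    unfold Phi
    rw [← hA]
    have h1 : A/m - (A * (1/m - 1/M) - Δ * Real.log (M/m)) = A/M + Δ * Real.log (M/m) := by
      field_simp
      ring
    have h2 : A/M ≤ Δ := by
      rw [div_le_iff₀ hM]
      linarith [hAM]
    have := hIl
    rw [hIval] at this
    have : A/m - (∫ y in m..M, Hstar g Δ T y / y^2)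
        ≤ A/m - (A * (1/m - 1/M) - Δ * Real.log (M/m)) := by linarith
    rw [h1] at this
    linarith
  linarith
end p6
lemma eta_eq_Hfun (Δ : ℝ) (g : ℕ → ℝ → ℝ) (n : ℕ) : eta Δ g n = Hfun g n Δ := rfl

section p7
variable {Δ : ℝ}

/-- convex with f 0 = 0 scales subadditively -/
lemma conv_scale {ff : ℝ → ℝ} (hconv : ConvexOn ℝ (Icc 0 Δ) ff) (hf0 : ff 0 = 0)
    {v lam : ℝ} (hv : v ∈ Icc (0:ℝ) Δ) (hl0 : 0 ≤ lam) (hl1 : lam ≤ 1) :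
    ff (lam * v) ≤ lam * ff v := by
  have h0 : (0:ℝ) ∈ Icc (0:ℝ) Δ := ⟨le_refl 0, le_trans hv.1 hv.2⟩
  have h := hconv.2 hv h0 hl0 (by linarith : 0 ≤ 1 - lam) (by ring)
  simp only [smul_eq_mul, mul_zero, add_zero, hf0] at h
  linarith

lemma conv_mono {ff : ℝ → ℝ} (hconv : ConvexOn ℝ (Icc 0 Δ) ff) (hf0 : ff 0 = 0)
    (hnn : ∀ v ∈ Icc (0:ℝ) Δ, 0 ≤ ff v)
    {a b : ℝ} (ha : a ∈ Icc (0:ℝ) Δ) (hb : b ∈ Icc (0:ℝ) Δ) (hab : a ≤ b) :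
    ff a ≤ ff b := by
  rcases eq_or_lt_of_le (le_trans ha.1 hab) with h | h
  · have hb0 : b = 0 := h.symm
    have ha0 : a = 0 := le_antisymm (hb0 ▸ hab) ha.1
    rw [ha0, hb0]
  · have hscale := conv_scale hconv hf0 hb (div_nonneg ha.1 h.le) ((div_le_one h).2 hab)
    rw [div_mul_cancel₀ _ (ne_of_gt h)] at hscale
    have h2 : a / b * ff b ≤ ff b := by
      have := hnn b hb
      nlinarith [(div_le_one h).2 hab, div_nonneg ha.1 h.le]
    linarith

/-- v ↦ f v * v is convex -/
lemma mul_self_convex {ff : ℝ → ℝ} (hconv : ConvexOn ℝ (Icc 0 Δ) ff) (hf0 : ff 0 = 0)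
    (hnn : ∀ v ∈ Icc (0:ℝ) Δ, 0 ≤ ff v) :
    ConvexOn ℝ (Icc (0:ℝ) Δ) (fun v => ff v * v) := by
  refine convexOn_of_slope_mono_adjacent (convex_Icc 0 Δ) ?_
  intro x y z hx hz hxy hyz
  have hy : y ∈ Icc (0:ℝ) Δ := ⟨le_trans hx.1 hxy.le, le_trans hyz.le hz.2⟩
  have hfxy : ff x ≤ ff y := conv_mono hconv hf0 hnn hx hy hxy.le
  have hfyz : ff y ≤ ff z := conv_mono hconv hf0 hnn hy hz hyz.le
  have hslope := hconv.slope_mono_adjacent hx hz hxy hyz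
  rw [div_le_div_iff₀ (by linarith) (by linarith)] at hslope ⊢
  have hx0 : 0 ≤ x := hx.1
  nlinarith [mul_le_mul_of_nonneg_left hslope hx0,
    mul_le_mul_of_nonneg_right (mul_le_mul_of_nonneg_left hfyz (by linarith : 0 ≤ y - x))
      (by linarith : 0 ≤ z - y),
    mul_le_mul_of_nonneg_right (mul_le_mul_of_nonneg_left hfxy (by linarith : 0 ≤ z - y))
      (by linarith : 0 ≤ y - x),
    mul_nonneg (mul_nonneg (by linarith : (0:ℝ) ≤ y - x) (by linarith : 0 ≤ z - y)) (sub_nonneg.2 hfyz)]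

/-- key quadratic inequality -/
lemma keyquad {pi s pt φh w vh : ℝ} (hpi : 1 ≤ pi) (hs0 : 0 ≤ s) (hs2 : s^2 = 1 - 1/pi)
    (hpt : 0 < pt) (hvh : 0 < vh) (hw0 : 0 < w) (hwvh : w ≤ vh) (hpw : pi*w ≤ vh)
    (hφh0 : 0 ≤ φh) (hφh : 2*φh ≤ pt)
    (hC : φh*(vh^2 - pi*w^2) ≤ pt*vh*(vh - pi*w)) :
    2*w*φh ≤ pt*(1-s)*vh := by
  have hpi0 : 0 < pi := by linarith
  have hps : pi*(1-s^2) = 1 := by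
    rw [hs2]; field_simp; ring
  rcases le_or_gt (vh^2 - pi*w^2) 0 with hcase | hcase
  · -- degenerate: forces w = vh, pi = 1, s = 0
    have h1 : pi*w^2 ≤ vh*w := by nlinarith
    have hwvh' : w = vh := by nlinarith
    have hpi1 : pi = 1 := by nlinarith
    have hs : s = 0 := by nlinarith [sq_nonneg s]
    rw [hwvh', hs]
    nlinarith
  · -- main case
    have hP : pi*(1+s)*(1-s) = 1 := by linear_combination hps
    have hiden : (1-s)*(vh^2 - pi*w^2) - 2*(w*(vh - pi*w))
        = pi*(1+s)*(w - (1-s)*vh)^2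
          + (1 - pi*(1+s)*(1-s))*((1-s)*vh^2 - 2*w*vh) := by ring
    have hid : 2*(w*(vh - pi*w)) ≤ (1-s)*(vh^2 - pi*w^2) := by
      have hpos : 0 ≤ pi*(1+s)*(w - (1-s)*vh)^2 := by positivity
      have he : (1-s)*(vh^2 - pi*w^2) - 2*(w*(vh - pi*w))
          = pi*(1+s)*(w - (1-s)*vh)^2 := by rw [hiden, hP]; ring
      linarith
    have hchain : 2*w*φh*(vh^2 - pi*w^2) ≤ pt*(1-s)*vh*(vh^2 - pi*w^2) := by
      calc 2*w*φh*(vh^2 - pi*w^2) = 2*w*(φh*(vh^2 - pi*w^2)) := by ring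
        _ ≤ 2*w*(pt*vh*(vh - pi*w)) := by
            refine mul_le_mul_of_nonneg_left hC (by linarith)
        _ = pt*vh*(2*(w*(vh - pi*w))) := by ring
        _ ≤ pt*vh*((1-s)*(vh^2 - pi*w^2)) := by
            refine mul_le_mul_of_nonneg_left hid (by positivity)
        _ = pt*(1-s)*vh*(vh^2 - pi*w^2) := by ring
    exact le_of_mul_le_mul_right hchain hcase

end p7

set_option maxHeartbeats 1000000 in
/-- Worst-case inventory bound for CR-Pursuit(π) in one-way trading with
convex price elasticity (Lemma 12 of the paper). -/
theorem stmt18 (Δ m M : ℝ) (hΔ : 0 < Δ) (hm : 0 < m) (hmM : m ≤ M)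
    (pi : ℝ) (hpi : 1 ≤ pi)
    (T : ℕ) (p : ℕ → ℝ) (f : ℕ → ℝ → ℝ) (g : ℕ → ℝ → ℝ)
    (hgdef : ∀ t < T, ∀ v, g t v = (p t - f t v) * v)
    (hp : ∀ t < T, p t ∈ Set.Icc m M)
    (hf : ∀ t < T, ConvexOn ℝ (Set.Icc 0 Δ) (f t) ∧ f t 0 = 0 ∧
      ∀ v ∈ Set.Icc (0:ℝ) Δ, 0 ≤ f t v)
    (vhat : ℕ → ℝ)
    (hvhat : ∀ t < T, vhat t ∈ Set.Icc 0 Δ ∧ IsMaxOn (g t) (Set.Icc 0 Δ) (vhat t))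
    (vb : ℕ → ℝ) (htraj : CRTraj Δ g T pi vb)
    (hvb : ∀ t < T, vb t ∈ Set.Icc 0 (vhat t)) :
    ∑ t ∈ Finset.range T, vb t ≤
      (2 * Δ / (pi * (1 + Real.sqrt (1 - 1 / pi)))) * (Real.log (M / m) + 1) := by
  have hpi0 : 0 < pi := by linarith
  set s := Real.sqrt (1 - 1/pi) with hsdef
  have hs0 : 0 ≤ s := Real.sqrt_nonneg _
  have h1pi : 0 ≤ 1 - 1/pi := by
    have : 1/pi ≤ 1 := by rw [div_le_one hpi0]; exact hpi
    linarith
  have hs2 : s^2 = 1 - 1/pi := Real.sq_sqrt h1pi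
  have h1s : (0:ℝ) < 1 + s := by linarith
  have hM : 0 < M := lt_of_lt_of_le hm hmM
  -- basic g facts
  have hg0 : ∀ t < T, g t 0 = 0 := fun t ht => by rw [hgdef t ht 0]; ring
  have hubp : ∀ t < T, ∀ x, 0 ≤ x → x ≤ Δ → g t x ≤ p t * x := by
    intro t ht x hx0 hxΔ
    rw [hgdef t ht x]
    have := (hf t ht).2.2 x ⟨hx0, hxΔ⟩
    nlinarith
  have hub : ∀ t < T, ∀ x, 0 ≤ x → x ≤ Δ → g t x ≤ M * x := by
    intro t ht x hx0 hxΔ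
    have h1 := hubp t ht x hx0 hxΔ
    have h2 := (hp t ht).2
    nlinarith
  have hconc : ∀ t < T, ConcaveOn ℝ (Icc (0:ℝ) Δ) (g t) := by
    intro t ht
    have hFconv := mul_self_convex (hf t ht).1 (hf t ht).2.1 (hf t ht).2.2
    have haff : ConcaveOn ℝ (Icc (0:ℝ) Δ) (fun v => p t * v) := by
      refine ⟨convex_Icc _ _, ?_⟩
      intro x hx y hy a b ha hb hab
      simp only [smul_eq_mul]
      exact le_of_eq (by ring)
    have hsub := haff.sub hFconv
    have he : g t = (fun v => p t * v) - (fun v => f t v * v) := by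
      funext v
      simp only [Pi.sub_apply]
      rw [hgdef t ht v]; ring
    rw [he]
    exact hsub
  -- per-step bound
  have hstep : ∀ t < T, vb t ≤ 2 / (pi * (1+s)) * ((Hfun g (t+1) Δ - Hfun g t Δ) / p t) := by
    intro t ht
    have hvhm := (hvhat t ht).1
    have hmax := (hvhat t ht).2
    have hw0 : 0 ≤ vb t := (hvb t ht).1
    have hwvh : vb t ≤ vhat t := (hvb t ht).2
    have hpt : 0 < p t := lt_of_lt_of_le hm (hp t ht).1
    set E := Hfun g (t+1) Δ - Hfun g t Δ with hE
    have hΔη : pi * g t (vb t) = E := by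
      have h := (htraj t ht).2
      rw [eta_eq_Hfun, eta_eq_Hfun] at h
      exact h
    have hg0' : ∀ u < t + 1, g u 0 = 0 := fun u hu => hg0 u (by omega)
    have hub' : ∀ u < t + 1, ∀ x, 0 ≤ x → x ≤ Δ → g u x ≤ M * x :=
      fun u hu => hub u (by omega)
    have hg0'' : ∀ u < t, g u 0 = 0 := fun u hu => hg0 u (by omega)
    have hub'' : ∀ u < t, ∀ x, 0 ≤ x → x ≤ Δ → g u x ≤ M * x :=
      fun u hu => hub u (by omega)
    have hE0 : 0 ≤ E := by
      have := Hfun_mono_n (δ := Δ) hg0' hM.le hub' hΔ.le (le_refl Δ)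
      simp only [hE]; linarith
    have hle : E ≤ g t (vhat t) := by
      have hdec := Hfun_decomp (n := t) hM.le hub' hΔ.le (le_refl Δ)
      have hkey : Hfun g (t+1) Δ ≤ Hfun g t Δ + g t (vhat t) := by
        refine csSup_le ⟨0, zero_mem_Sset hg0' hΔ.le⟩ fun r hr => ?_
        obtain ⟨u, hu0, huδ, hru⟩ := hdec r hr
        have h1 : Hfun g t (Δ - u) ≤ Hfun g t Δ :=
          Hfun_mono_δ hg0'' hM.le hub'' (by linarith) (by linarith) (le_refl Δ)
        have h2 : g t u ≤ g t (vhat t) := hmax (show u ∈ Icc (0:ℝ) Δ from ⟨hu0, huδ⟩)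
        linarith
      simp only [hE]; linarith
    rcases eq_or_lt_of_le hw0 with hw | hw
    · rw [← hw]
      have h1 : 0 ≤ E / p t := div_nonneg hE0 hpt.le
      have h2 : (0:ℝ) ≤ 2 / (pi * (1+s)) := by positivity
      exact mul_nonneg h2 h1
    · have hvh0 : 0 < vhat t := lt_of_lt_of_le hw hwvh
      have hwIcc : vb t ∈ Icc (0:ℝ) Δ := ⟨hw0, le_trans hwvh hvhm.2⟩
      have hφ0 : 0 ≤ f t (vb t) := (hf t ht).2.2 _ hwIcc
      have hφh0 : 0 ≤ f t (vhat t) := (hf t ht).2.2 _ hvhm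
      -- f(vhat) ≤ p t / 2
      have hφh2 : 2 * f t (vhat t) ≤ p t := by
        by_contra hcon
        push_neg at hcon
        have hφhpos : 0 < f t (vhat t) := by linarith
        set lam := p t / (2 * f t (vhat t)) with hlam
        have hlam0 : 0 ≤ lam := by positivity
        have hlam1 : lam ≤ 1 := by
          rw [hlam, div_le_one (by positivity)]; linarith
        have hfs := conv_scale (hf t ht).1 (hf t ht).2.1 hvhm hlam0 hlam1
        have hmem : lam * vhat t ∈ Icc (0:ℝ) Δ :=
          ⟨mul_nonneg hlam0 hvhm.1, by nlinarith [hvhm.2, hvhm.1]⟩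
        have hgmax : g t (lam * vhat t) ≤ g t (vhat t) := hmax hmem
        rw [hgdef t ht (lam * vhat t), hgdef t ht (vhat t)] at hgmax
        have h5 : (p t - lam * f t (vhat t)) * (lam * vhat t) ≤ (p t - f t (vhat t)) * vhat t := by
          nlinarith [mul_nonneg hlam0 hvhm.1]
        rw [hlam] at h5
        have hL : (p t - p t / (2 * f t (vhat t)) * f t (vhat t))
            * (p t / (2 * f t (vhat t)) * vhat t) * (4 * f t (vhat t))
            = p t^2 * vhat t := by
          field_simp
          ring
        have h8 : p t^2 * vhat t ≤ (p t - f t (vhat t)) * vhat t * (4 * f t (vhat t)) := by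
          rw [← hL]
          exact mul_le_mul_of_nonneg_right h5 (by positivity)
        have hsqpos : 0 < (p t - 2 * f t (vhat t))^2 := by
          have hne : p t - 2 * f t (vhat t) ≠ 0 := by linarith
          positivity
        nlinarith [h8, hsqpos, hvh0, mul_pos hsqpos hvh0]
      -- scaling
      have hφscale : f t (vb t) * vhat t ≤ vb t * f t (vhat t) := by
        have hl0 : 0 ≤ vb t / vhat t := by positivity
        have hl1 : vb t / vhat t ≤ 1 := (div_le_one hvh0).2 hwvh
        have hcs := conv_scale (hf t ht).1 (hf t ht).2.1 hvhm hl0 hl1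
        rw [div_mul_cancel₀ _ (ne_of_gt hvh0)] at hcs
        have := mul_le_mul_of_nonneg_right hcs hvh0.le
        calc f t (vb t) * vhat t ≤ vb t / vhat t * f t (vhat t) * vhat t := this
          _ = vb t * f t (vhat t) := by field_simp
      have hφφh : f t (vb t) ≤ f t (vhat t) := by
        nlinarith [hφscale, mul_le_mul_of_nonneg_right hwvh hφh0]
      have hEeq : pi * ((p t - f t (vb t)) * vb t) = E := by
        rw [← hgdef t ht (vb t)]; exact hΔη
      have hlee : pi * ((p t - f t (vb t)) * vb t) ≤ (p t - f t (vhat t)) * vhat t := by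
        rw [hEeq]
        rw [hgdef t ht (vhat t)] at hle
        exact hle
      have hgap : 0 < p t - f t (vhat t) := by linarith
      have hpw : pi * vb t ≤ vhat t := by
        have h7 : pi * vb t * (p t - f t (vhat t)) ≤ pi * ((p t - f t (vb t)) * vb t) := by
          have hmul := mul_le_mul_of_nonneg_left
            (by linarith : p t - f t (vhat t) ≤ p t - f t (vb t))
            (by positivity : (0:ℝ) ≤ pi * vb t)
          nlinarith [hmul]
        have h8 := le_trans h7 hlee
        refine le_of_mul_le_mul_right ?_ hgap
        nlinarith [h8]
      have hC : f t (vhat t) * (vhat t^2 - pi * vb t^2) ≤ p t * vhat t * (vhat t - pi * vb t) := by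
        have h9 : pi * ((p t - f t (vb t)) * vb t) * vhat t ≤ (p t - f t (vhat t)) * vhat t * vhat t :=
          mul_le_mul_of_nonneg_right hlee hvh0.le
        nlinarith [mul_le_mul_of_nonneg_left hφscale (mul_nonneg hpi0.le hw0)]
      have hkey := keyquad hpi hs0 hs2 hpt hvh0 hw hwvh hpw hφh0 hφh2 hC
      have hφb : 2 * f t (vb t) ≤ p t * (1 - s) := by
        have h10 : 2 * f t (vb t) * vhat t ≤ p t * (1-s) * vhat t := by
          nlinarith
        exact le_of_mul_le_mul_right h10 hvh0
      have hfin : pi * (1+s) * p t * vb t ≤ 2 * E := by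
        nlinarith [hEeq]
      have hrw : 2 / (pi * (1+s)) * (E / p t) = (2*E) / (pi*(1+s)* p t) := by
        rw [div_mul_div_comm]
      rw [hrw, le_div_iff₀ (by positivity)]
      linarith
  -- sum up
  have hsum := sum_increments_le (p := p) (T := T) hΔ hm hmM hg0 hub hubp hp hconc
  calc ∑ t ∈ Finset.range T, vb t
      ≤ ∑ t ∈ Finset.range T, 2 / (pi * (1+s)) * ((Hfun g (t+1) Δ - Hfun g t Δ) / p t) :=
        Finset.sum_le_sum fun t ht => hstep t (Finset.mem_range.1 ht)
    _ = 2 / (pi * (1+s)) * ∑ t ∈ Finset.range T, (Hfun g (t+1) Δ - Hfun g t Δ) / p t := by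
        rw [Finset.mul_sum]
    _ ≤ 2 / (pi * (1+s)) * (Δ * (Real.log (M/m) + 1)) := by
        refine mul_le_mul_of_nonneg_left hsum (by positivity)
    _ = 2 * Δ / (pi * (1 + s)) * (Real.log (M / m) + 1) := by
        field_simp
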